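/- Let n ≥ 1 and let A be a real n×n matrix satisfying the cyclic non-increasing condition such that Ae > 0 (all row sums strictly positive). Then det A = 0 if the graph 𝒢(A) has more than one closed strongly connected component, and det A > 0 if 𝒢(A) has exactly one closed strongly connected component. -/

import Mathlib

open Matrix BigOperators Finset
set_option linter.unusedSectionVars false
open Fin.NatCast

/-- The cyclic non-increasing condition: each row of `A` weakly decreases
cyclically starting from the diagonal, i.e. `a_{i[j-1]} ≥ a_{ij}` for all
`j ≠ i` (indices in `Fin n`, arithmetic mod `n`). -/
def CyclicNonIncr {n : ℕ} [NeZero n] (A : Matrix (Fin n) (Fin n) ℝ) : Prop :=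
  ∀ i j : Fin n, j ≠ i → A i (j - 1) ≥ A i j

/-- The directed graph `𝒢(A)` has an edge from `i` to `j` iff `a_{i[j-1]} > a_{ij}`. -/
def GraphEdge {n : ℕ} [NeZero n] (A : Matrix (Fin n) (Fin n) ℝ) (i j : Fin n) : Prop :=
  A i (j - 1) > A i j

/-- `i` and `j` are strongly connected in `𝒢(A)`: there are directed paths
(possibly of length 0) from `i` to `j` and from `j` to `i`. -/
def Conn {n : ℕ} [NeZero n] (A : Matrix (Fin n) (Fin n) ℝ) (i j : Fin n) : Prop :=
  Relation.ReflTransGen (GraphEdge A) i j ∧ Relation.ReflTransGen (GraphEdge A) j i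

/-- `C` is a strongly connected component of `𝒢(A)`: an equivalence class of
the strong-connectivity relation. -/
def IsSCC {n : ℕ} [NeZero n] (A : Matrix (Fin n) (Fin n) ℝ) (C : Set (Fin n)) : Prop :=
  ∃ i, C = {j | Conn A i j}

/-- `C` is a closed SCC of `𝒢(A)`: an SCC with no edge leaving it. -/
def IsClosedSCC {n : ℕ} [NeZero n] (A : Matrix (Fin n) (Fin n) ℝ) (C : Set (Fin n)) : Prop :=
  IsSCC A C ∧ ∀ i ∈ C, ∀ j, GraphEdge A i j → j ∈ C

/-- `C` is an open SCC of `𝒢(A)`: an SCC with some edge leaving it. -/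
def IsOpenSCC {n : ℕ} [NeZero n] (A : Matrix (Fin n) (Fin n) ℝ) (C : Set (Fin n)) : Prop :=
  IsSCC A C ∧ ¬ (∀ i ∈ C, ∀ j, GraphEdge A i j → j ∈ C)

namespace Stmt10

variable {n : ℕ} [NeZero n]

noncomputable def gp (x : Fin n → ℝ) (j : Fin n) : ℝ :=
  (∑ t ∈ Finset.range j.val, x ↑t) - (∑ k, x k) / n * j.val

lemma sum_cast (x : Fin n → ℝ) : ∑ t ∈ Finset.range n, x ↑t = ∑ k, x k := by
  rw [← Fin.sum_univ_eq_sum_range (fun t => x ↑t) n]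
  simp

lemma gp_succ (x : Fin n → ℝ) (j : Fin n) :
    gp x (j + 1) - gp x j = x j - (∑ k, x k) / n := by
  have hn0 : 0 < n := Nat.pos_of_ne_zero (NeZero.ne n)
  have hnR : (n : ℝ) ≠ 0 := by exact_mod_cast hn0.ne'
  have hval : ((j + 1 : Fin n)).val = (j.val + 1) % n := by
    rw [Fin.add_def]; simp
  by_cases h : j.val + 1 < n
  · have hv : ((j + 1 : Fin n)).val = j.val + 1 := by rw [hval, Nat.mod_eq_of_lt h]
    rw [gp, gp, hv, Finset.sum_range_succ, Fin.cast_val_eq_self]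
    push_cast
    ring
  · have hjn : j.val + 1 = n := by have := j.isLt; omega
    have hv0 : ((j + 1 : Fin n)).val = 0 := by rw [hval, hjn, Nat.mod_self]
    have hσ : ∑ k, x k = (∑ t ∈ Finset.range j.val, x ↑t) + x j := by
      rw [← sum_cast x]
      have hr : Finset.range n = Finset.range (j.val + 1) := by rw [hjn]
      rw [hr, Finset.sum_range_succ, Fin.cast_val_eq_self]
    have hnc : (j.val : ℝ) = (n : ℝ) - 1 := by
      have : ((j.val : ℝ) + 1) = (n : ℝ) := by exact_mod_cast congrArg (Nat.cast : ℕ → ℝ) hjn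
      linarith
    rw [gp, gp, hv0, hnc]
    simp only [Finset.range_zero, Finset.sum_empty, Nat.cast_zero, mul_zero, sub_zero]
    rw [hσ]
    field_simp
    ring

lemma star (A : Matrix (Fin n) (Fin n) ℝ) (x : Fin n → ℝ) (i : Fin n) :
    ∑ j : Fin n, (A i (j - 1) - A i j) * (gp x j - gp x i)
      = A.mulVec x i - (∑ k, x k) / n * A.mulVec (fun _ => (1:ℝ)) i := by
  have h1 : ∑ j : Fin n, A i (j - 1) * (gp x j - gp x i)
      = ∑ j : Fin n, A i j * (gp x (j + 1) - gp x i) := by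
    refine (Fintype.sum_equiv (Equiv.addRight (1 : Fin n)) _ _ ?_).symm
    intro k
    simp [Equiv.coe_addRight, add_sub_cancel_right]
  simp only [sub_mul]
  rw [Finset.sum_sub_distrib, h1, ← Finset.sum_sub_distrib]
  have h2 : ∀ j : Fin n, A i j * (gp x (j + 1) - gp x i) - A i j * (gp x j - gp x i)
      = A i j * x j - (∑ k, x k) / n * (A i j * 1) := by
    intro j
    linear_combination (A i j) * (gp_succ x j)
  rw [Finset.sum_congr rfl (fun j _ => h2 j), Finset.sum_sub_distrib, ← Finset.mul_sum]
  simp [Matrix.mulVec, dotProduct]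


lemma hstar0 (A : Matrix (Fin n) (Fin n) ℝ) (x : Fin n → ℝ) (hx : A.mulVec x = 0) (i : Fin n) :
    ∑ j : Fin n, (A i (j - 1) - A i j) * (gp x j - gp x i)
      = -((∑ k, x k) / n * A.mulVec (fun _ => (1:ℝ)) i) := by
  rw [star, hx]; simp

lemma inj (A : Matrix (Fin n) (Fin n) ℝ) (hA : CyclicNonIncr A)
    (hrow : ∀ i, 0 < A.mulVec (fun _ => (1 : ℝ)) i)
    (hU : ∀ U V : Set (Fin n), U.Nonempty → V.Nonempty →
      (∀ i ∈ U, ∀ j, GraphEdge A i j → j ∈ U) →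
      (∀ i ∈ V, ∀ j, GraphEdge A i j → j ∈ V) → (U ∩ V).Nonempty)
    (x : Fin n → ℝ) (hx : A.mulVec x = 0) : x = 0 := by
  have hn0 : (0:ℝ) < n := by
    have := Nat.pos_of_ne_zero (NeZero.ne n); exact_mod_cast this
  set σ := ∑ k, x k with hσdef
  rcases lt_trichotomy σ 0 with hs | hs | hs
  · obtain ⟨i0, -, hmax⟩ := Finset.exists_max_image Finset.univ (gp x) ⟨0, Finset.mem_univ 0⟩
    have hle : ∑ j : Fin n, (A i0 (j - 1) - A i0 j) * (gp x j - gp x i0) ≤ 0 := by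
      refine Finset.sum_nonpos fun j _ => ?_
      by_cases hj : j = i0
      · subst hj; simp
      · exact mul_nonpos_of_nonneg_of_nonpos (sub_nonneg.mpr (hA i0 j hj))
          (sub_nonpos.mpr (hmax j (Finset.mem_univ j)))
    have heq := hstar0 A x hx i0
    have h1 : σ / n < 0 := div_neg_of_neg_of_pos hs hn0
    have h2 : σ / n * A.mulVec (fun _ => (1:ℝ)) i0 < 0 := mul_neg_of_neg_of_pos h1 (hrow i0)
    linarith
  · -- σ = 0 : maximum principle
    obtain ⟨imax, -, hmax⟩ := Finset.exists_max_image Finset.univ (gp x) ⟨0, Finset.mem_univ 0⟩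
    obtain ⟨imin, -, hmin⟩ := Finset.exists_min_image Finset.univ (gp x) ⟨0, Finset.mem_univ 0⟩
    have hz : ∀ i, ∑ j : Fin n, (A i (j - 1) - A i j) * (gp x j - gp x i) = 0 := by
      intro i
      rw [hstar0 A x hx i, ← hσdef, hs]
      simp
    set U : Set (Fin n) := {j | gp x j = gp x imax} with hUdef
    set V : Set (Fin n) := {j | gp x j = gp x imin} with hVdef
    have hUc : ∀ i ∈ U, ∀ j, GraphEdge A i j → j ∈ U := by
      intro i hi j he
      by_cases hj : j = i
      · subst hj; exact hi
      · have hterms : ∀ k ∈ Finset.univ, (A i (k - 1) - A i k) * (gp x k - gp x i) ≤ 0 := by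
          intro k _
          by_cases hk : k = i
          · subst hk; simp
          · refine mul_nonpos_of_nonneg_of_nonpos (sub_nonneg.mpr (hA i k hk)) ?_
            rw [hi]
            exact sub_nonpos.mpr (hmax k (Finset.mem_univ k))
        have hall := (Finset.sum_eq_zero_iff_of_nonpos hterms).mp (hz i) j (Finset.mem_univ j)
        have hd : 0 < A i (j - 1) - A i j := sub_pos.mpr he
        have : gp x j - gp x i = 0 := by
          rcases mul_eq_zero.mp hall with h | h
          · exact absurd h hd.ne'
          · exact h
        have : gp x j = gp x i := by linarith
        rw [hUdef]; simp only [Set.mem_setOf_eq]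
        rw [this, hi]
    have hVc : ∀ i ∈ V, ∀ j, GraphEdge A i j → j ∈ V := by
      intro i hi j he
      by_cases hj : j = i
      · subst hj; exact hi
      · have hterms : ∀ k ∈ Finset.univ, 0 ≤ (A i (k - 1) - A i k) * (gp x k - gp x i) := by
          intro k _
          by_cases hk : k = i
          · subst hk; simp
          · refine mul_nonneg (sub_nonneg.mpr (hA i k hk)) ?_
            rw [hi]
            exact sub_nonneg.mpr (hmin k (Finset.mem_univ k))
        have hall := (Finset.sum_eq_zero_iff_of_nonneg hterms).mp (hz i) j (Finset.mem_univ j)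
        have hd : 0 < A i (j - 1) - A i j := sub_pos.mpr he
        have : gp x j - gp x i = 0 := by
          rcases mul_eq_zero.mp hall with h | h
          · exact absurd h hd.ne'
          · exact h
        have : gp x j = gp x i := by linarith
        rw [hVdef]; simp only [Set.mem_setOf_eq]
        rw [this, hi]
    obtain ⟨k, hkU, hkV⟩ := hU U V ⟨imax, rfl⟩ ⟨imin, rfl⟩ hUc hVc
    have hconst : ∀ j, gp x j = gp x imax := by
      intro j
      have h1 : gp x j ≤ gp x imax := hmax j (Finset.mem_univ j)
      have h2 : gp x imin ≤ gp x j := hmin j (Finset.mem_univ j)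
      have h3 : gp x imax = gp x imin := by
        have := hkU; have := hkV
        simp only [hUdef, hVdef, Set.mem_setOf_eq] at hkU hkV
        rw [← hkU, hkV]
      linarith
    funext j
    have := gp_succ x j
    rw [hconst (j + 1), hconst j, ← hσdef, hs] at this
    simp at this
    simpa using this.symm
  · obtain ⟨i0, -, hmin⟩ := Finset.exists_min_image Finset.univ (gp x) ⟨0, Finset.mem_univ 0⟩
    have hle : 0 ≤ ∑ j : Fin n, (A i0 (j - 1) - A i0 j) * (gp x j - gp x i0) := by
      refine Finset.sum_nonneg fun j _ => ?_
      by_cases hj : j = i0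
      · subst hj; simp
      · exact mul_nonneg (sub_nonneg.mpr (hA i0 j hj))
          (sub_nonneg.mpr (hmin j (Finset.mem_univ j)))
    have heq := hstar0 A x hx i0
    have h1 : 0 < σ / n := div_pos hs hn0
    have h2 : 0 < σ / n * A.mulVec (fun _ => (1:ℝ)) i0 := mul_pos h1 (hrow i0)
    linarith

lemma det_ne_zero (A : Matrix (Fin n) (Fin n) ℝ) (hA : CyclicNonIncr A)
    (hrow : ∀ i, 0 < A.mulVec (fun _ => (1 : ℝ)) i)
    (hU : ∀ U V : Set (Fin n), U.Nonempty → V.Nonempty →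
      (∀ i ∈ U, ∀ j, GraphEdge A i j → j ∈ U) →
      (∀ i ∈ V, ∀ j, GraphEdge A i j → j ∈ V) → (U ∩ V).Nonempty) :
    A.det ≠ 0 := by
  intro hdet
  obtain ⟨v, hv0, hv⟩ := (Matrix.exists_mulVec_eq_zero_iff).mpr hdet
  exact hv0 (inj A hA hrow hU v hv)


lemma det_zero (A : Matrix (Fin n) (Fin n) ℝ) (hA : CyclicNonIncr A)
    (hrow : ∀ i, 0 < A.mulVec (fun _ => (1 : ℝ)) i) (C₁ C₂ : Set (Fin n))
    (h1ne : C₁.Nonempty) (h2ne : C₂.Nonempty)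
    (h1c : ∀ i ∈ C₁, ∀ j, GraphEdge A i j → j ∈ C₁)
    (h2c : ∀ i ∈ C₂, ∀ j, GraphEdge A i j → j ∈ C₂)
    (hdisj : ∀ j, j ∈ C₁ → j ∉ C₂) : A.det = 0 := by
  classical
  by_contra hdet
  have hn0 : (0:ℝ) < n := by
    have := Nat.pos_of_ne_zero (NeZero.ne n); exact_mod_cast this
  set b : Fin n → ℝ := fun i => if i ∈ C₁ then A.mulVec (fun _ => (1:ℝ)) i else 0 with hbdef
  set x := (A⁻¹).mulVec b with hxdef
  have hx : A.mulVec x = b := by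
    rw [hxdef, Matrix.mulVec_mulVec, Matrix.mul_nonsing_inv _ (isUnit_iff_ne_zero.mpr hdet),
      Matrix.one_mulVec]
  set σ := ∑ k, x k with hσdef
  have hst : ∀ i, ∑ j : Fin n, (A i (j-1) - A i j) * (gp x j - gp x i)
      = b i - σ/n * A.mulVec (fun _ => (1:ℝ)) i := fun i => by rw [star, hx]
  obtain ⟨i1, hi1mem, hmax⟩ := Finset.exists_max_image (Finset.univ.filter (· ∈ C₁)) (gp x)
    (by obtain ⟨w, hw⟩ := h1ne; exact ⟨w, by simp [hw]⟩)
  have hi1 : i1 ∈ C₁ := by simpa using hi1mem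
  have hle1 : ∑ j : Fin n, (A i1 (j-1) - A i1 j) * (gp x j - gp x i1) ≤ 0 := by
    refine Finset.sum_nonpos fun j _ => ?_
    by_cases hj : j = i1
    · subst hj; simp
    · by_cases hjC : j ∈ C₁
      · exact mul_nonpos_of_nonneg_of_nonpos (sub_nonneg.mpr (hA i1 j hj))
          (sub_nonpos.mpr (hmax j (by simp [hjC])))
      · have hne : ¬ GraphEdge A i1 j := fun he => hjC (h1c i1 hi1 j he)
        have heq : A i1 (j-1) = A i1 j := le_antisymm (not_lt.mp hne) (hA i1 j hj)
        rw [heq, sub_self, zero_mul]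
  have hb1 : b i1 = A.mulVec (fun _ => (1:ℝ)) i1 := by simp [hbdef, hi1]
  have key1 : 1 ≤ σ / n := by
    have h := hst i1
    rw [hb1] at h
    nlinarith [hrow i1]
  obtain ⟨i2, hi2mem, hmin⟩ := Finset.exists_min_image (Finset.univ.filter (· ∈ C₂)) (gp x)
    (by obtain ⟨w, hw⟩ := h2ne; exact ⟨w, by simp [hw]⟩)
  have hi2 : i2 ∈ C₂ := by simpa using hi2mem
  have hge2 : 0 ≤ ∑ j : Fin n, (A i2 (j-1) - A i2 j) * (gp x j - gp x i2) := by
    refine Finset.sum_nonneg fun j _ => ?_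
    by_cases hj : j = i2
    · subst hj; simp
    · by_cases hjC : j ∈ C₂
      · exact mul_nonneg (sub_nonneg.mpr (hA i2 j hj))
          (sub_nonneg.mpr (hmin j (by simp [hjC])))
      · have hne : ¬ GraphEdge A i2 j := fun he => hjC (h2c i2 hi2 j he)
        have heq : A i2 (j-1) = A i2 j := le_antisymm (not_lt.mp hne) (hA i2 j hj)
        rw [heq, sub_self, zero_mul]
  have hb2 : b i2 = 0 := by
    have : i2 ∉ C₁ := fun h => hdisj i2 h hi2
    simp [hbdef, this]
  have key2 : σ / n ≤ 0 := by
    have h := hst i2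
    rw [hb2] at h
    nlinarith [hrow i2]
  linarith


lemma exists_closedSCC_subset (A : Matrix (Fin n) (Fin n) ℝ) (W : Set (Fin n))
    (hne : W.Nonempty) (hcl : ∀ i ∈ W, ∀ j, GraphEdge A i j → j ∈ W) :
    ∃ C, IsClosedSCC A C ∧ C ⊆ W := by
  classical
  set reach : Fin n → Finset (Fin n) :=
    fun i => Finset.univ.filter (fun j => Relation.ReflTransGen (GraphEdge A) i j) with hreach
  obtain ⟨w, hw⟩ := hne
  obtain ⟨i, himem, hminc⟩ := Finset.exists_min_image (Finset.univ.filter (· ∈ W))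
    (fun i => (reach i).card) ⟨w, by simp [hw]⟩
  have hiW : i ∈ W := by simpa using himem
  have hreachW : ∀ m, Relation.ReflTransGen (GraphEdge A) i m → m ∈ W := by
    intro m hm
    induction hm with
    | refl => exact hiW
    | tail _ h2 ih => exact hcl _ ih _ h2
  have hback : ∀ m, Relation.ReflTransGen (GraphEdge A) i m →
      Relation.ReflTransGen (GraphEdge A) m i := by
    intro m hm
    have hsub : reach m ⊆ reach i := by
      intro k hk
      simp only [hreach, Finset.mem_filter, Finset.mem_univ, true_and] at hk ⊢
      exact hm.trans hk
    have hcard : (reach i).card ≤ (reach m).card :=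
      hminc m (by simp [hreachW m hm])
    have hEq : reach m = reach i := Finset.eq_of_subset_of_card_le hsub hcard
    have : i ∈ reach m := by
      rw [hEq]
      simp only [hreach, Finset.mem_filter, Finset.mem_univ, true_and]
      exact Relation.ReflTransGen.refl
    simpa [hreach] using this
  refine ⟨{j | Conn A i j}, ⟨⟨i, rfl⟩, ?_⟩, ?_⟩
  · intro a ha j he
    have h1 : Relation.ReflTransGen (GraphEdge A) i j := ha.1.tail he
    exact ⟨h1, hback j h1⟩
  · intro j hj
    exact hreachW j hj.1

lemma conn_trans (A : Matrix (Fin n) (Fin n) ℝ) {a b c : Fin n}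
    (h1 : Conn A a b) (h2 : Conn A b c) : Conn A a c :=
  ⟨h1.1.trans h2.1, h2.2.trans h1.2⟩

lemma scc_eq_of_mem (A : Matrix (Fin n) (Fin n) ℝ) {i₁ i₂ k : Fin n}
    (h1 : Conn A i₁ k) (h2 : Conn A i₂ k) :
    {j | Conn A i₁ j} = {j | Conn A i₂ j} := by
  ext j
  simp only [Set.mem_setOf_eq]
  constructor
  · intro h
    exact conn_trans A (conn_trans A h2 ⟨h1.2, h1.1⟩) h
  · intro h
    exact conn_trans A (conn_trans A h1 ⟨h2.2, h2.1⟩) h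


noncomputable def Bt (A : Matrix (Fin n) (Fin n) ℝ) (t : ℝ) : Matrix (Fin n) (Fin n) ℝ :=
  (1 - t) • A + t • (1 : Matrix (Fin n) (Fin n) ℝ)

lemma Bt_apply (A : Matrix (Fin n) (Fin n) ℝ) (t : ℝ) (i j : Fin n) :
    Bt A t i j = (1 - t) * A i j + t * (if i = j then 1 else 0) := by
  simp [Bt, Matrix.one_apply]

lemma Bt_zero (A : Matrix (Fin n) (Fin n) ℝ) : Bt A 0 = A := by simp [Bt]

lemma Bt_one (A : Matrix (Fin n) (Fin n) ℝ) : Bt A 1 = 1 := by simp [Bt]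

lemma Bt_cyclic (A : Matrix (Fin n) (Fin n) ℝ) (hA : CyclicNonIncr A) (t : ℝ)
    (ht0 : 0 ≤ t) (ht1 : t ≤ 1) : CyclicNonIncr (Bt A t) := by
  intro i j hj
  rw [Bt_apply, Bt_apply]
  have h1 : A i (j - 1) ≥ A i j := hA i j hj
  have h2 : (if i = j then (1:ℝ) else 0) = 0 := if_neg (fun h => hj h.symm)
  have h3 : (0:ℝ) ≤ (if i = j - 1 then (1:ℝ) else 0) := by split <;> norm_num
  have h4 := mul_le_mul_of_nonneg_left h1 (sub_nonneg.mpr ht1)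
  have h5 := mul_nonneg ht0 h3
  rw [h2]
  linarith

lemma Bt_row (A : Matrix (Fin n) (Fin n) ℝ)
    (hrow : ∀ i, 0 < A.mulVec (fun _ => (1 : ℝ)) i) (t : ℝ)
    (ht0 : 0 ≤ t) (ht1 : t ≤ 1) : ∀ i, 0 < (Bt A t).mulVec (fun _ => (1:ℝ)) i := by
  intro i
  have h : (Bt A t).mulVec (fun _ => (1:ℝ)) i
      = (1 - t) * A.mulVec (fun _ => (1:ℝ)) i + t * 1 := by
    simp [Bt, Matrix.add_mulVec, Matrix.smul_mulVec, Matrix.one_mulVec]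
  rw [h]
  rcases eq_or_lt_of_le ht0 with hc | hc
  · have := mul_pos (by linarith : (0:ℝ) < 1 - t) (hrow i)
    linarith
  · have := mul_nonneg (sub_nonneg.mpr ht1) (hrow i).le
    linarith

lemma Bt_edge (A : Matrix (Fin n) (Fin n) ℝ) (hA : CyclicNonIncr A) (t : ℝ)
    (ht0 : 0 < t) (ht1 : t ≤ 1) (hn2 : (1 : Fin n) ≠ 0) (i : Fin n) :
    GraphEdge (Bt A t) i (i + 1) := by
  have hne : (i + 1 : Fin n) ≠ i := by
    intro h
    apply hn2
    have h' : i + 1 = i + 0 := by simpa using h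
    exact add_left_cancel h'
  unfold GraphEdge
  rw [add_sub_cancel_right, Bt_apply, Bt_apply]
  have h1 : A i i ≥ A i (i + 1) := by
    have := hA i (i + 1) hne
    rwa [add_sub_cancel_right] at this
  rw [if_pos rfl, if_neg (fun h => hne h.symm)]
  have h4 := mul_le_mul_of_nonneg_left h1 (sub_nonneg.mpr ht1)
  linarith

lemma closed_univ (A' : Matrix (Fin n) (Fin n) ℝ)
    (hedge : ∀ i : Fin n, GraphEdge A' i (i + 1)) (U : Set (Fin n))
    (hUne : U.Nonempty) (hUc : ∀ i ∈ U, ∀ j, GraphEdge A' i j → j ∈ U) :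
    ∀ j, j ∈ U := by
  obtain ⟨u, hu⟩ := hUne
  have hall : ∀ k : ℕ, u + (k : Fin n) ∈ U := by
    intro k
    induction k with
    | zero => simpa using hu
    | succ m ih =>
      have h : u + ((m + 1 : ℕ) : Fin n) = (u + (m : Fin n)) + 1 := by push_cast; abel
      rw [h]
      exact hUc _ ih _ (hedge _)
  intro j
  have := hall ((j - u).val)
  rwa [Fin.cast_val_eq_self, show u + (j - u) = j by abel] at this

lemma Bt_hU (A : Matrix (Fin n) (Fin n) ℝ) (hA : CyclicNonIncr A) (t : ℝ)
    (ht0 : 0 < t) (ht1 : t ≤ 1) :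
    ∀ U V : Set (Fin n), U.Nonempty → V.Nonempty →
      (∀ i ∈ U, ∀ j, GraphEdge (Bt A t) i j → j ∈ U) →
      (∀ i ∈ V, ∀ j, GraphEdge (Bt A t) i j → j ∈ V) → (U ∩ V).Nonempty := by
  intro U V hUne hVne hUc hVc
  by_cases h1 : n = 1
  · obtain ⟨u, hu⟩ := hUne
    obtain ⟨v, hv⟩ := hVne
    subst h1
    exact ⟨u, hu, by rwa [Subsingleton.elim u v]⟩
  · have hn2 : (1 : Fin n) ≠ 0 := by
      intro hh
      have hv := congrArg Fin.val hh
      have h2 : 2 ≤ n := by have := Nat.pos_of_ne_zero (NeZero.ne n); omega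
      rw [Fin.val_one'] at hv
      simp at hv
      omega
    have hedge := Bt_edge A hA t ht0 ht1 hn2
    obtain ⟨u, hu⟩ := hUne
    exact ⟨u, hu, closed_univ (Bt A t) hedge V hVne hVc u⟩

end Stmt10


theorem stmt_10 (n : ℕ) [NeZero n] (hn : 1 ≤ n) (A : Matrix (Fin n) (Fin n) ℝ)
    (hA : CyclicNonIncr A)
    (hrow : ∀ i, 0 < A.mulVec (fun _ => (1 : ℝ)) i) :
    ((∃ C₁ C₂ : Set (Fin n), IsClosedSCC A C₁ ∧ IsClosedSCC A C₂ ∧ C₁ ≠ C₂) →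
      A.det = 0) ∧
    ((∃ C : Set (Fin n), IsClosedSCC A C ∧
      ∀ C' : Set (Fin n), IsClosedSCC A C' → C' = C) → 0 < A.det) := by
  classical
  constructor
  · rintro ⟨C₁, C₂, ⟨⟨i₁, hC₁⟩, h1c⟩, ⟨⟨i₂, hC₂⟩, h2c⟩, hne⟩
    have h1ne : C₁.Nonempty :=
      ⟨i₁, by rw [hC₁]; exact ⟨Relation.ReflTransGen.refl, Relation.ReflTransGen.refl⟩⟩
    have h2ne : C₂.Nonempty :=
      ⟨i₂, by rw [hC₂]; exact ⟨Relation.ReflTransGen.refl, Relation.ReflTransGen.refl⟩⟩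
    have hdisj : ∀ j, j ∈ C₁ → j ∉ C₂ := by
      intro j hj1 hj2
      apply hne
      rw [hC₁] at hj1
      rw [hC₂] at hj2
      rw [hC₁, hC₂]
      exact Stmt10.scc_eq_of_mem A hj1 hj2
    exact Stmt10.det_zero A hA hrow C₁ C₂ h1ne h2ne h1c h2c hdisj
  · rintro ⟨C, hC, huniq⟩
    have hCne : C.Nonempty := by
      obtain ⟨⟨i, hCi⟩, -⟩ := hC
      exact ⟨i, by rw [hCi]; exact ⟨Relation.ReflTransGen.refl, Relation.ReflTransGen.refl⟩⟩
    have hU0 : ∀ U V : Set (Fin n), U.Nonempty → V.Nonempty →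
        (∀ i ∈ U, ∀ j, GraphEdge A i j → j ∈ U) →
        (∀ i ∈ V, ∀ j, GraphEdge A i j → j ∈ V) → (U ∩ V).Nonempty := by
      intro U V hUne hVne hUc hVc
      obtain ⟨CU, hCU, hCUsub⟩ := Stmt10.exists_closedSCC_subset A U hUne hUc
      obtain ⟨CV, hCV, hCVsub⟩ := Stmt10.exists_closedSCC_subset A V hVne hVc
      obtain ⟨c, hc⟩ := hCne
      have e1 : CU = C := huniq CU hCU
      have e2 : CV = C := huniq CV hCV
      exact ⟨c, hCUsub (e1 ▸ hc), hCVsub (e2 ▸ hc)⟩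
    have hdetA : A.det ≠ 0 := Stmt10.det_ne_zero A hA hrow hU0
    by_contra hnpos
    have hlt : A.det < 0 := lt_of_le_of_ne (not_lt.mp hnpos) hdetA
    have hcont : Continuous fun t : ℝ => (Stmt10.Bt A t).det := by
      apply Continuous.matrix_det
      unfold Stmt10.Bt
      exact ((continuous_const.sub continuous_id).smul continuous_const).add
        (continuous_id.smul continuous_const)
    have hmem : (0:ℝ) ∈ Set.Icc ((fun t : ℝ => (Stmt10.Bt A t).det) 0)
        ((fun t : ℝ => (Stmt10.Bt A t).det) 1) := by
      simp only [Stmt10.Bt_zero, Stmt10.Bt_one, Matrix.det_one]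
      exact ⟨hlt.le, zero_le_one⟩
    obtain ⟨t, htI, ht⟩ := intermediate_value_Icc zero_le_one hcont.continuousOn hmem
    rcases eq_or_lt_of_le htI.1 with h0 | h0
    · rw [← h0] at ht
      simp only at ht
      rw [Stmt10.Bt_zero] at ht
      exact hdetA ht
    · exact Stmt10.det_ne_zero (Stmt10.Bt A t)
        (Stmt10.Bt_cyclic A hA t (le_of_lt h0) htI.2)
        (Stmt10.Bt_row A hrow t htI.1 htI.2) (Stmt10.Bt_hU A hA t h0 htI.2) ht
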